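/- arXiv:2512.04789 — 7 statements merged into one kernel-verified Lean document; each statement's English description precedes it below -/
import Mathlib

section
/- Let φ be an alternating m-form on ℝ^n and let g₁, g₂ be two inner products (positive definite symmetric bilinear forms) on ℝ^n. If φ has comass at most 1 with respect to g₁ and with respect to g₂, then for every s ∈ [0,1] the bilinear form g(s) = (1−s)·g₁ + s·g₂ is again an inner product and φ has comass at most 1 with respect to g(s); that is, φ(v₁,…,v_m)² ≤ Gram_{g(s)}(v₁,…,v_m) for all v₁,…,v_m ∈ ℝ^n. -/
/-- The Gram determinant of the vectors `v 0, …, v (m-1)` with respect to a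
(bilinear) pairing `g` on `ℝ^n`: the determinant of the `m × m` matrix with
entries `g (v i) (v j)`. -/
noncomputable def gram {n m : ℕ} (g : (Fin n → ℝ) → (Fin n → ℝ) → ℝ)
    (v : Fin m → (Fin n → ℝ)) : ℝ :=
  (Matrix.of fun i j => g (v i) (v j)).det

/-- `g` is an inner product on `ℝ^n`: a symmetric bilinear form which is
positive definite. -/
def IsInnerProduct {n : ℕ} (g : (Fin n → ℝ) → (Fin n → ℝ) → ℝ) : Prop :=
  (∀ x y, g x y = g y x) ∧ (∀ x, IsLinearMap ℝ (g x)) ∧ ∀ v, v ≠ 0 → 0 < g v v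

open Matrix

lemma inner_expand {n : ℕ} {g : (Fin n → ℝ) → (Fin n → ℝ) → ℝ} (hg : IsInnerProduct g)
    (w : Fin n → ℝ) {m : ℕ} (v : Fin m → (Fin n → ℝ)) (x : Fin m → ℝ) :
    g w (∑ j, x j • v j) = ∑ j, x j * g w (v j) := by
  have := map_sum (IsLinearMap.mk' (g w) (hg.2.1 w)) (fun j => x j • v j) Finset.univ
  simp only [IsLinearMap.mk'_apply] at this
  rw [this]
  exact Finset.sum_congr rfl fun j _ => by rw [(hg.2.1 w).map_smul, smul_eq_mul]

lemma inner_dot {n m : ℕ} {g : (Fin n → ℝ) → (Fin n → ℝ) → ℝ} (hg : IsInnerProduct g)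
    (v : Fin m → (Fin n → ℝ)) (x : Fin m → ℝ) :
    star x ⬝ᵥ ((Matrix.of fun i j => g (v i) (v j)) *ᵥ x)
      = g (∑ i, x i • v i) (∑ i, x i • v i) := by
  rw [inner_expand hg _ v x]
  have : ∀ j, g (∑ i, x i • v i) (v j) = ∑ i, x i * g (v j) (v i) := by
    intro j
    rw [hg.1, inner_expand hg _ v x]
  simp only [this]
  simp [dotProduct, mulVec, Finset.mul_sum]
  rw [Finset.sum_comm]
  congr 1; ext j; congr 1; ext i; rw [hg.1 (v i) (v j)]; ring

lemma gram_posSemidef {n m : ℕ} {g : (Fin n → ℝ) → (Fin n → ℝ) → ℝ} (hg : IsInnerProduct g)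
    (v : Fin m → (Fin n → ℝ)) :
    (Matrix.of fun i j => g (v i) (v j)).PosSemidef := by
  rw [posSemidef_iff_dotProduct_mulVec]
  constructor
  · ext i j
    simp [conjTranspose_apply, hg.1 (v i) (v j)]
  · intro x
    rw [inner_dot hg v x]
    rcases eq_or_ne (∑ i, x i • v i) 0 with h | h
    · rw [h]
      have := (hg.2.1 0).map_smul 0 0
      simp at this
      simp [show g 0 0 = 0 by simpa using (IsLinearMap.mk' (g 0) (hg.2.1 0)).map_zero]
    · exact (hg.2.2 _ h).le

lemma gram_posDef {n m : ℕ} {g : (Fin n → ℝ) → (Fin n → ℝ) → ℝ} (hg : IsInnerProduct g)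
    {v : Fin m → (Fin n → ℝ)} (hv : LinearIndependent ℝ v) :
    (Matrix.of fun i j => g (v i) (v j)).PosDef := by
  refine posDef_iff_dotProduct_mulVec.mpr ⟨(gram_posSemidef hg v).1, fun x hx => ?_⟩
  rw [inner_dot hg v x]
  refine hg.2.2 _ fun h => hx ?_
  have := Fintype.linearIndependent_iff.mp hv x h
  funext i; exact this i


open scoped MatrixOrder in
lemma det_convex {m : ℕ} {A B : Matrix (Fin m) (Fin m) ℝ} (hA : A.PosDef) (hB : B.PosDef)
    {s : ℝ} (h0 : 0 ≤ s) (h1 : s ≤ 1) :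
    A.det ^ (1 - s) * B.det ^ s ≤ ((1 - s) • A + s • B).det := by
  have hAs := hA.posSemidef
  set S := CFC.sqrt A with hSdef
  have hS : S.PosSemidef := (CFC.sqrt_nonneg A).posSemidef
  have hSS : S * S = A := CFC.sqrt_mul_sqrt_self A hAs.nonneg
  have hdetSS : S.det * S.det = A.det := by rw [← det_mul, hSS]
  have hdetS0 : S.det ≠ 0 := by
    intro h
    rw [h, mul_zero] at hdetSS
    exact hA.det_pos.ne hdetSS
  have hdetS' : IsUnit S.det := isUnit_iff_ne_zero.mpr hdetS0
  have hSinv : S * S⁻¹ = 1 := mul_nonsing_inv S hdetS'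
  have hSinv' : S⁻¹ * S = 1 := nonsing_inv_mul S hdetS'
  have hSinvH : (S⁻¹)ᴴ = S⁻¹ := (hS.isHermitian.inv).eq
  set C := S⁻¹ * B * S⁻¹ with hCdef
  have hC : C.PosDef := by
    have : ((S⁻¹)ᴴ * B * S⁻¹).PosDef := by
      rw [posDef_iff_dotProduct_mulVec]
      constructor
      · exact isHermitian_conjTranspose_mul_mul _ hB.isHermitian
      · intro x hx
        have hx' : S⁻¹ *ᵥ x ≠ 0 := by
          intro h
          apply hx
          have := congrArg (fun y => S *ᵥ y) h
          simpa [mulVec_mulVec, hSinv] using this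
        simpa only [star_mulVec, dotProduct_mulVec, vecMul_vecMul] using hB.dotProduct_mulVec_pos hx'
    rwa [hSinvH] at this
  have hB_eq : B = S * C * S := by
    rw [hCdef]
    rw [show S * (S⁻¹ * B * S⁻¹) * S = (S * S⁻¹) * B * (S⁻¹ * S) by
      simp only [Matrix.mul_assoc]]
    rw [hSinv, hSinv', one_mul, mul_one]
  have hkey : (1 - s) • A + s • B = S * ((1 - s) • (1 : Matrix (Fin m) (Fin m) ℝ) + s • C) * S := by
    rw [Matrix.mul_add, Matrix.add_mul]
    congr 1
    · rw [Matrix.mul_smul, Matrix.smul_mul, Matrix.mul_one, hSS]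
    · rw [Matrix.mul_smul, Matrix.smul_mul, hB_eq]
  -- eigenvalues of C
  have hCh := hC.isHermitian
  set lam := hCh.eigenvalues with hlam
  have hlam_pos : ∀ i, 0 < lam i := hC.eigenvalues_pos
  have hdetC : C.det = ∏ i, lam i := by
    simpa using hCh.det_eq_prod_eigenvalues
  set U := (hCh.eigenvectorUnitary : Matrix (Fin m) (Fin m) ℝ) with hU
  have hUU : U * star U = 1 := (Matrix.mem_unitaryGroup_iff).mp hCh.eigenvectorUnitary.2
  have hspec : C = U * diagonal lam * star U := by
    have := hCh.spectral_theorem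
    simpa using this
  have hMeq : (1 - s) • (1 : Matrix (Fin m) (Fin m) ℝ) + s • C
      = U * diagonal (fun i => (1 - s) + s * lam i) * star U := by
    have h1' : (1 : Matrix (Fin m) (Fin m) ℝ) = U * 1 * star U := by
      rw [Matrix.mul_one, hUU]
    calc (1 - s) • (1 : Matrix (Fin m) (Fin m) ℝ) + s • C
        = U * ((1 - s) • 1 + s • diagonal lam) * star U := by
          rw [hspec]
          conv_lhs => rw [h1']
          rw [Matrix.mul_add, Matrix.add_mul]
          congr 1 <;> rw [Matrix.mul_smul, Matrix.smul_mul]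
      _ = U * diagonal (fun i => (1 - s) + s * lam i) * star U := by
          congr 1
          congr 1
          ext i j
          rcases eq_or_ne i j with rfl | h
          · simp
          · simp [Matrix.diagonal_apply_ne _ h, Matrix.one_apply_ne h]
  have hdetU : U.det * (star U).det = 1 := by
    rw [← det_mul, hUU, det_one]
  have hdetM : ((1 - s) • (1 : Matrix (Fin m) (Fin m) ℝ) + s • C).det
      = ∏ i, ((1 - s) + s * lam i) := by
    rw [hMeq, det_mul, det_mul, mul_comm, ← mul_assoc, mul_comm (star U).det, hdetU, one_mul,
      det_diagonal]
  -- AM-GM per factor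
  have hfac : ∀ i, lam i ^ s ≤ (1 - s) + s * lam i := by
    intro i
    have h2 := Real.geom_mean_le_arith_mean2_weighted (by linarith : (0:ℝ) ≤ 1 - s) h0
      zero_le_one (hlam_pos i).le (by ring)
    simpa using h2
  have hprod : (∏ i, lam i) ^ s ≤ ∏ i, ((1 - s) + s * lam i) := by
    rw [← Real.finset_prod_rpow _ _ (fun i _ => (hlam_pos i).le)]
    exact Finset.prod_le_prod (fun i _ => Real.rpow_nonneg (hlam_pos i).le s)
      (fun i _ => hfac i)
  have hdet_conv : ((1 - s) • A + s • B).det = A.det * ∏ i, ((1 - s) + s * lam i) := by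
    rw [hkey, det_mul, det_mul, hdetM,
      show S.det * (∏ i, ((1 - s) + s * lam i)) * S.det
        = (S.det * S.det) * ∏ i, ((1 - s) + s * lam i) from by ring, hdetSS]
  have hdetB : B.det = A.det * C.det := by
    rw [hB_eq, det_mul, det_mul,
      show S.det * C.det * S.det = (S.det * S.det) * C.det from by ring, hdetSS]
  calc A.det ^ (1 - s) * B.det ^ s
      = A.det ^ (1 - s) * (A.det ^ s * C.det ^ s) := by
        rw [hdetB, Real.mul_rpow hA.det_pos.le hC.det_pos.le]
    _ = A.det * C.det ^ s := by
        rw [← mul_assoc, ← Real.rpow_add hA.det_pos, show 1 - s + s = (1:ℝ) from by ring,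
          Real.rpow_one]
    _ ≤ A.det * ∏ i, ((1 - s) + s * lam i) := by
        refine mul_le_mul_of_nonneg_left ?_ hA.det_pos.le
        rw [hdetC]
        exact hprod
    _ = _ := hdet_conv.symm

lemma psd_det_nonneg {m : ℕ} {M : Matrix (Fin m) (Fin m) ℝ} (h : M.PosSemidef) :
    0 ≤ M.det := by
  rw [show M.det = ∏ i, h.isHermitian.eigenvalues i from by
    simpa using h.isHermitian.det_eq_prod_eigenvalues]
  exact Finset.prod_nonneg fun i _ => h.eigenvalues_nonneg i


/-- If an alternating `m`-form `φ` on `ℝ^n` has comass at most `1` with respect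
to two inner products `g₁` and `g₂`, then for every `s ∈ [0,1]` the convex
combination `(1-s)•g₁ + s•g₂` is again an inner product and `φ` has comass at
most `1` with respect to it. -/
theorem stmt0 {n m : ℕ} (φ : (Fin n → ℝ) [⋀^Fin m]→ₗ[ℝ] ℝ)
    (g₁ g₂ : (Fin n → ℝ) → (Fin n → ℝ) → ℝ)
    (hg₁ : IsInnerProduct g₁) (hg₂ : IsInnerProduct g₂)
    (hc₁ : ∀ v : Fin m → (Fin n → ℝ), (φ v) ^ 2 ≤ gram g₁ v)
    (hc₂ : ∀ v : Fin m → (Fin n → ℝ), (φ v) ^ 2 ≤ gram g₂ v)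
    (s : ℝ) (hs : s ∈ Set.Icc (0 : ℝ) 1) :
    IsInnerProduct (fun x y => (1 - s) * g₁ x y + s * g₂ x y) ∧
      ∀ v : Fin m → (Fin n → ℝ),
        (φ v) ^ 2 ≤ gram (fun x y => (1 - s) * g₁ x y + s * g₂ x y) v := by
  obtain ⟨hs0, hs1⟩ := hs
  have hIP : IsInnerProduct (fun x y => (1 - s) * g₁ x y + s * g₂ x y) := by
    refine ⟨fun x y => ?_, fun x => ?_, fun v hv => ?_⟩
    · show (1 - s) * g₁ x y + s * g₂ x y = (1 - s) * g₁ y x + s * g₂ y x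
      rw [hg₁.1 x y, hg₂.1 x y]
    · constructor
      · intro y z
        show (1 - s) * g₁ x (y + z) + s * g₂ x (y + z)
          = ((1 - s) * g₁ x y + s * g₂ x y) + ((1 - s) * g₁ x z + s * g₂ x z)
        rw [(hg₁.2.1 x).map_add, (hg₂.2.1 x).map_add]
        ring
      · intro c y
        show (1 - s) * g₁ x (c • y) + s * g₂ x (c • y)
          = c • ((1 - s) * g₁ x y + s * g₂ x y)
        rw [(hg₁.2.1 x).map_smul, (hg₂.2.1 x).map_smul]
        simp only [smul_eq_mul]
        ring
    · show 0 < (1 - s) * g₁ v v + s * g₂ v v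
      have h1 := hg₁.2.2 v hv
      have h2 := hg₂.2.2 v hv
      rcases lt_or_eq_of_le hs1 with h | h
      · have ha : 0 < (1 - s) * g₁ v v := mul_pos (by linarith) h1
        have hb : 0 ≤ s * g₂ v v := mul_nonneg hs0 h2.le
        linarith
      · subst h
        simpa using h2
  refine ⟨hIP, fun v => ?_⟩
  have hmat : (Matrix.of fun i j => (1 - s) * g₁ (v i) (v j) + s * g₂ (v i) (v j))
      = (1 - s) • (Matrix.of fun i j => g₁ (v i) (v j))
        + s • (Matrix.of fun i j => g₂ (v i) (v j)) := by
    ext i j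
    simp
  by_cases hφ : φ v = 0
  · rw [hφ]
    simpa [_root_.gram] using psd_det_nonneg (gram_posSemidef hIP v)
  · have hv : LinearIndependent ℝ v := by
      by_contra h
      exact hφ (φ.map_linearDependent v h)
    have hφ2 : 0 < (φ v) ^ 2 := by positivity
    calc (φ v) ^ 2 = ((φ v) ^ 2) ^ (1 - s) * ((φ v) ^ 2) ^ s := by
          rw [← Real.rpow_add hφ2, show 1 - s + s = (1:ℝ) from by ring, Real.rpow_one]
      _ ≤ (gram g₁ v) ^ (1 - s) * (gram g₂ v) ^ s :=
          mul_le_mul (Real.rpow_le_rpow hφ2.le (hc₁ v) (by linarith))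
            (Real.rpow_le_rpow hφ2.le (hc₂ v) hs0)
            (Real.rpow_nonneg hφ2.le s) (Real.rpow_nonneg (le_trans hφ2.le (hc₁ v)) _)
      _ ≤ _ := by
          have hd := det_convex (gram_posDef hg₁ hv) (gram_posDef hg₂ hv) hs0 hs1
          unfold _root_.gram
          rw [hmat]
          exact hd
end

section
/- Let 1 ≤ m ≤ n, let φ be an alternating m-form on ℝ^n, and let v₁,…,v_m ∈ ℝ^n be linearly independent vectors with φ(v₁,…,v_m) = 1. Set V = span{v₁,…,v_m}. Then there exists a unique linear subspace W ⊆ ℝ^n that is complementary to V (i.e., V ∩ W = {0} and V + W = ℝ^n) and satisfies: for every i ∈ {1,…,m} and every w ∈ W, φ(v₁,…,v_{i−1}, w, v_{i+1},…,v_m) = 0. -/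
/-- Harvey–Lawson decomposition lemma: if `φ` is an alternating `m`-form on
`ℝ^n` and `v₁, …, v_m` are linearly independent with `φ(v₁,…,v_m) = 1`, then
there is a unique subspace `W` complementary to `V = span{v₁,…,v_m}` such that
`φ(v₁,…,v_{i-1}, w, v_{i+1},…,v_m) = 0` for every `i` and every `w ∈ W`. -/
theorem stmt4 {n m : ℕ} (hm : 1 ≤ m) (hmn : m ≤ n)
    (φ : (Fin n → ℝ) [⋀^Fin m]→ₗ[ℝ] ℝ)
    (v : Fin m → (Fin n → ℝ)) (hli : LinearIndependent ℝ v) (hφv : φ v = 1) :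
    ∃! W : Submodule ℝ (Fin n → ℝ),
      IsCompl (Submodule.span ℝ (Set.range v)) W ∧
        ∀ i : Fin m, ∀ w ∈ W, φ (Function.update v i w) = 0 := by
  classical
  set f : Fin m → (Fin n → ℝ) →ₗ[ℝ] ℝ := fun i =>
    { toFun := fun x => φ (Function.update v i x)
      map_add' := fun x y => by simp
      map_smul' := fun c x => by simp } with hf
  have hfapp : ∀ i x, f i x = φ (Function.update v i x) := fun i x => rfl
  have hfv : ∀ i j, f i (v j) = if j = i then 1 else 0 := by
    intro i j
    by_cases h : j = i
    · subst h; simp [hfapp, Function.update_eq_self, hφv]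
    · rw [if_neg h, hfapp]
      refine φ.map_eq_zero_of_eq _ (i := i) (j := j) ?_ (Ne.symm h)
      simp [Function.update_apply, h]
  have hfsum : ∀ (c : Fin m → ℝ), ∀ i, f i (∑ j, c j • v j) = c i := by
    intro c i
    rw [map_sum]
    simp [hfv, Finset.sum_ite_eq']
  set g : (Fin n → ℝ) →ₗ[ℝ] (Fin m → ℝ) := LinearMap.pi f with hg
  set W : Submodule ℝ (Fin n → ℝ) := LinearMap.ker g with hW
  have hmemW : ∀ x, x ∈ W ↔ ∀ i, φ (Function.update v i x) = 0 := by
    intro x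
    simp [hW, LinearMap.mem_ker, hg, funext_iff, hfapp]
  have hdis : Disjoint (Submodule.span ℝ (Set.range v)) W := by
    rw [Submodule.disjoint_def]
    intro x hxV hxW
    obtain ⟨c, rfl⟩ := (Submodule.mem_span_range_iff_exists_fun ℝ).mp hxV
    have : ∀ i, c i = 0 := by
      intro i
      have := (hmemW _).mp hxW i
      rw [← hfapp, hfsum] at this
      exact this
    simp [this]
  have hcodis : Submodule.span ℝ (Set.range v) ⊔ W = ⊤ := by
    rw [eq_top_iff]
    intro x _
    rw [Submodule.mem_sup]
    refine ⟨∑ i, f i x • v i, ?_, x - ∑ i, f i x • v i, ?_, by abel⟩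
    · exact Submodule.sum_mem _ fun i _ =>
        Submodule.smul_mem _ _ (Submodule.subset_span ⟨i, rfl⟩)
    · rw [hmemW]
      intro i
      have : f i (x - ∑ j, f j x • v j) = 0 := by
        rw [map_sub, hfsum]
        ring
      rw [← hfapp]; exact this
  refine ⟨W, ⟨⟨hdis, codisjoint_iff.mpr hcodis⟩, fun i w hw => (hmemW w).mp hw i⟩, ?_⟩
  rintro W' ⟨hcompl', hzero'⟩
  have hle : W' ≤ W := fun w hw => (hmemW w).mpr fun i => hzero' i w hw
  refine le_antisymm hle ?_
  intro w hw
  have : w ∈ Submodule.span ℝ (Set.range v) ⊔ W' := by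
    rw [codisjoint_iff.mp hcompl'.2]; trivial
  obtain ⟨a, ha, b, hb, rfl⟩ := Submodule.mem_sup.mp this
  have ha0 : a = 0 := by
    have : a ∈ W := by
      have : a = (a + b) - b := by abel
      rw [this]
      exact W.sub_mem hw (hle hb)
    exact (Submodule.disjoint_def.mp hdis) a ha this
  rw [ha0, zero_add]
  exact hb
end

section
/- Equip ℝ^n with its standard inner product ⟨·,·⟩ and let v₁,…,v_n be an orthonormal basis of ℝ^n. Let 1 ≤ m ≤ n and let φ be an alternating m-form on ℝ^n that has comass at most 1 with respect to ⟨·,·⟩ and satisfies φ(v₁,…,v_m) = 1. Then for every i ∈ {1,…,m} and every j ∈ {m+1,…,n}, φ(v₁,…,v_{i−1}, v_j, v_{i+1},…,v_m) = 0. Consequently, the unique complementary subspace W to V = span{v₁,…,v_m} on which φ(v₁,…,v_{i−1}, w, v_{i+1},…,v_m) vanishes for all i and all w ∈ W is exactly span{v_{m+1},…,v_n}, the orthogonal complement of V. -/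
/-- The standard inner product on `ℝ^n`. -/
def stdInner {n : ℕ} (x y : Fin n → ℝ) : ℝ := ∑ i, x i * y i

/-- The Gram determinant of `v 0, …, v (m-1)` with respect to the standard
inner product on `ℝ^n`. -/
noncomputable def gramStd {n m : ℕ} (v : Fin m → (Fin n → ℝ)) : ℝ :=
  (Matrix.of fun i j => stdInner (v i) (v j)).det

lemma stdInner_add_left {n : ℕ} (x y z : Fin n → ℝ) :
    stdInner (x + y) z = stdInner x z + stdInner y z := by
  simp [stdInner, add_mul, Finset.sum_add_distrib]

lemma stdInner_smul_left {n : ℕ} (c : ℝ) (x z : Fin n → ℝ) :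
    stdInner (c • x) z = c * stdInner x z := by
  simp [stdInner, Finset.mul_sum, mul_assoc]

lemma stdInner_comm {n : ℕ} (x y : Fin n → ℝ) : stdInner x y = stdInner y x := by
  simp [stdInner, mul_comm]

lemma stdInner_add_right {n : ℕ} (x y z : Fin n → ℝ) :
    stdInner x (y + z) = stdInner x y + stdInner x z := by
  rw [stdInner_comm, stdInner_add_left, stdInner_comm y x, stdInner_comm z x]

lemma stdInner_smul_right {n : ℕ} (c : ℝ) (x z : Fin n → ℝ) :
    stdInner x (c • z) = c * stdInner x z := by
  rw [stdInner_comm, stdInner_smul_left, stdInner_comm z x]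

lemma stdInner_sum_left {n : ℕ} {ι : Type*} [Fintype ι] (g : ι → ℝ)
    (f : ι → (Fin n → ℝ)) (w : Fin n → ℝ) :
    stdInner (∑ i, g i • f i) w = ∑ i, g i * stdInner (f i) w := by
  simp only [stdInner, Finset.sum_apply, Pi.smul_apply, smul_eq_mul, Finset.sum_mul,
    Finset.mul_sum]
  rw [Finset.sum_comm]
  exact Finset.sum_congr rfl fun i _ => Finset.sum_congr rfl fun j _ => by ring

/-- Key vanishing lemma. -/
lemma stmt6_aux {n m : ℕ} (hmn : m ≤ n)
    (v : Fin n → (Fin n → ℝ))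
    (hortho : ∀ i j : Fin n, stdInner (v i) (v j) = if i = j then 1 else 0)
    (φ : (Fin n → ℝ) [⋀^Fin m]→ₗ[ℝ] ℝ)
    (hcomass : ∀ u : Fin m → (Fin n → ℝ), (φ u) ^ 2 ≤ gramStd u)
    (hcal : φ (fun i : Fin m => v (Fin.castLE hmn i)) = 1) :
    ∀ i : Fin m, ∀ j : Fin n, m ≤ (j : ℕ) →
      φ (Function.update (fun i : Fin m => v (Fin.castLE hmn i)) i (v j)) = 0 := by
  intro i j hj
  set b : Fin m → (Fin n → ℝ) := fun i => v (Fin.castLE hmn i) with hb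
  set a : ℝ := φ (Function.update b i (v j)) with ha
  have hji : ∀ k : Fin m, j ≠ Fin.castLE hmn k := by
    intro k h
    have : (j : ℕ) = (k : ℕ) := by rw [h]; rfl
    omega
  set u : Fin m → (Fin n → ℝ) := Function.update b i (b i + a • v j) with hu
  -- value of φ on u
  have hφu : φ u = 1 + a ^ 2 := by
    rw [hu, φ.map_update_add, φ.map_update_smul, Function.update_eq_self, hcal, ← ha]
    simp [sq]
  -- entries of the Gram matrix of u
  have key : ∀ k l : Fin m, stdInner (u k) (u l) =
      if k = l then (if k = i then 1 + a ^ 2 else 1) else 0 := by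
    intro k l
    have hbv : ∀ k : Fin m, b k = v (Fin.castLE hmn k) := fun _ => rfl
    have huk : ∀ k : Fin m, u k = if k = i then b i + a • v j else b k := by
      intro k; rw [hu, Function.update_apply]
    by_cases hk : k = i <;> by_cases hl : l = i
    · have hkl : k = l := hk.trans hl.symm
      have e1 : (Fin.castLE hmn i : Fin n) ≠ j := Ne.symm (hji i)
      rw [huk, huk, if_pos hk, if_pos hl, if_pos hkl, if_pos hk]
      simp only [stdInner_add_left, stdInner_add_right, stdInner_smul_left,
        stdInner_smul_right, hbv, hortho]
      simp only [if_pos rfl, if_neg e1, if_neg (hji i), if_true]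
      ring
    · have hkl : ¬ k = l := fun h => hl (h.symm.trans hk)
      have h2 : (Fin.castLE hmn i : Fin n) ≠ Fin.castLE hmn l := by
        simp only [ne_eq, Fin.castLE_inj]; exact fun h => hl h.symm
      rw [huk, huk, if_pos hk, if_neg hl, if_neg hkl]
      simp only [stdInner_add_left, stdInner_smul_left, hbv, hortho]
      simp only [if_neg h2, if_neg (hji l)]
      ring
    · have hkl : ¬ k = l := fun h => hk (h.trans hl)
      have h2 : (Fin.castLE hmn k : Fin n) ≠ Fin.castLE hmn i := by
        simp only [ne_eq, Fin.castLE_inj]; exact hk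
      rw [huk, huk, if_neg hk, if_pos hl, if_neg hkl]
      simp only [stdInner_add_right, stdInner_smul_right, hbv, hortho]
      simp only [if_neg h2, if_neg (Ne.symm (hji k))]
      ring
    · rw [huk, huk, if_neg hk, if_neg hl, hbv, hbv, hortho, if_neg hk]
      by_cases h : k = l
      · rw [if_pos (show Fin.castLE hmn k = Fin.castLE hmn l by rw [h]), if_pos h]
      · rw [if_neg (fun hc => h (Fin.castLE_injective hmn hc)), if_neg h]
  -- gram of u
  have hgram : gramStd u = 1 + a ^ 2 := by
    have hmat : (Matrix.of fun k l => stdInner (u k) (u l)) =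
        Matrix.diagonal (fun k => if k = i then 1 + a ^ 2 else 1) := by
      ext k l
      rw [Matrix.of_apply, key k l]
      by_cases h : k = l
      · subst h; simp
      · simp [Matrix.diagonal_apply_ne _ h, if_neg h]
    rw [gramStd, hmat, Matrix.det_diagonal]
    simp [Finset.prod_ite_eq']
  have hcom := hcomass u
  rw [hφu, hgram] at hcom
  have ha2 : a ^ 2 ≤ 0 := by nlinarith [sq_nonneg a, sq_nonneg (a ^ 2)]
  have h0 : a = 0 := by nlinarith [sq_nonneg a]
  rw [ha] at h0
  exact h0

/-- Decomposition for a calibration form: let `v₁,…,v_n` be an orthonormal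
basis of `ℝ^n` and `φ` an alternating `m`-form of comass at most `1` (for the
standard inner product) calibrating `span{v₁,…,v_m}`, i.e. `φ(v₁,…,v_m) = 1`.
Then `φ(v₁,…,v_{i-1}, v_j, v_{i+1},…,v_m) = 0` for all `1 ≤ i ≤ m < j ≤ n`,
and the unique complement `W` of `V = span{v₁,…,v_m}` on which
`φ(v₁,…,v_{i-1},·,v_{i+1},…,v_m)` vanishes is exactly `span{v_{m+1},…,v_n}`. -/
theorem stmt6 {n m : ℕ} (hm : 1 ≤ m) (hmn : m ≤ n)
    (v : Fin n → (Fin n → ℝ))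
    (hortho : ∀ i j : Fin n, stdInner (v i) (v j) = if i = j then 1 else 0)
    (φ : (Fin n → ℝ) [⋀^Fin m]→ₗ[ℝ] ℝ)
    (hcomass : ∀ u : Fin m → (Fin n → ℝ), (φ u) ^ 2 ≤ gramStd u)
    (hcal : φ (fun i : Fin m => v (Fin.castLE hmn i)) = 1) :
    (∀ i : Fin m, ∀ j : Fin n, m ≤ (j : ℕ) →
        φ (Function.update (fun i : Fin m => v (Fin.castLE hmn i)) i (v j)) = 0) ∧
      ∀ W : Submodule ℝ (Fin n → ℝ),
        (IsCompl (Submodule.span ℝ (Set.range fun i : Fin m => v (Fin.castLE hmn i))) W ∧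
            ∀ i : Fin m, ∀ w ∈ W,
              φ (Function.update (fun i : Fin m => v (Fin.castLE hmn i)) i w) = 0) ↔
          W = Submodule.span ℝ {x : Fin n → ℝ | ∃ j : Fin n, m ≤ (j : ℕ) ∧ x = v j} := by
  have part1 := stmt6_aux hmn v hortho φ hcomass hcal
  refine ⟨part1, ?_⟩
  set b : Fin m → (Fin n → ℝ) := fun i => v (Fin.castLE hmn i) with hb
  set S : Set (Fin n) := {j | (j : ℕ) < m} with hS
  -- the two key sets are images of index sets
  have hrangeb : Set.range b = v '' S := by
    ext x
    constructor
    · rintro ⟨i, rfl⟩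
      exact ⟨Fin.castLE hmn i, i.isLt, rfl⟩
    · rintro ⟨j, hjS, rfl⟩
      exact ⟨⟨(j : ℕ), hjS⟩, by simp [hb, Fin.castLE]⟩
  have hsetc : {x : Fin n → ℝ | ∃ j : Fin n, m ≤ (j : ℕ) ∧ x = v j} = v '' Sᶜ := by
    ext x
    simp only [Set.mem_setOf_eq, Set.mem_image, Set.mem_compl_iff, hS, not_lt]
    constructor
    · rintro ⟨j, hj1, rfl⟩; exact ⟨j, hj1, rfl⟩
    · rintro ⟨j, hj1, rfl⟩; exact ⟨j, hj1, rfl⟩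
  -- v is linearly independent and spans
  have hli : LinearIndependent ℝ v := by
    rw [Fintype.linearIndependent_iff]
    intro g hg i
    have h1 : stdInner (∑ k, g k • v k) (v i) = g i := by
      rw [stdInner_sum_left]
      simp [hortho]
    rw [hg] at h1
    have h0 : stdInner (0 : Fin n → ℝ) (v i) = 0 := by simp [stdInner]
    rw [h0] at h1
    exact h1.symm
  have hn : 1 ≤ n := le_trans hm hmn
  have hspan : Submodule.span ℝ (Set.range v) = ⊤ := by
    have : Nonempty (Fin n) := ⟨⟨0, hn⟩⟩
    exact hli.span_eq_top_of_card_eq_finrank (by simp)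
  -- span (v '' S) and span (v '' Sᶜ) are complementary
  have hcompl : IsCompl (Submodule.span ℝ (v '' S)) (Submodule.span ℝ (v '' Sᶜ)) := by
    constructor
    · exact hli.disjoint_span_image disjoint_compl_right
    · rw [codisjoint_iff, ← Submodule.span_union, ← Set.image_union,
        Set.union_compl_self, Set.image_univ, hspan]
  -- the linear map w ↦ φ (update b i w)
  set L : Fin m → ((Fin n → ℝ) →ₗ[ℝ] ℝ) :=
    fun i => φ.toMultilinearMap.toLinearMap b i with hL
  have hLapp : ∀ (i : Fin m) (w : Fin n → ℝ), L i w = φ (Function.update b i w) :=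
    fun _ _ => rfl
  -- φ (update b i ·) vanishes on span (v '' Sᶜ)
  have hvanish : ∀ i : Fin m, ∀ w ∈ Submodule.span ℝ (v '' Sᶜ),
      φ (Function.update b i w) = 0 := by
    intro i w hw
    have hsub : Submodule.span ℝ (v '' Sᶜ) ≤ LinearMap.ker (L i) := by
      rw [Submodule.span_le]
      rintro x ⟨j, hjS, rfl⟩
      rw [SetLike.mem_coe, LinearMap.mem_ker, hLapp]
      exact part1 i j (not_lt.1 hjS)
    rw [← hLapp]
    exact LinearMap.mem_ker.1 (hsub hw)
  -- the characterization
  intro W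
  constructor
  · rintro ⟨hWcompl, hWvan⟩
    rw [hrangeb] at hWcompl
    rw [hsetc]
    have hle : W ≤ Submodule.span ℝ (v '' Sᶜ) := by
      intro w hw
      have hmem : w ∈ Submodule.span ℝ (v '' S) ⊔ Submodule.span ℝ (v '' Sᶜ) := by
        rw [hcompl.sup_eq_top]; trivial
      obtain ⟨p, hp, q, hq, hpq⟩ := Submodule.mem_sup.1 hmem
      rw [← hrangeb] at hp
      obtain ⟨c, hc⟩ := (Submodule.mem_span_range_iff_exists_fun ℝ).1 hp
      -- each coefficient vanishes
      have hci : ∀ i : Fin m, c i = 0 := by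
        intro i
        have h0 : φ (Function.update b i w) = 0 := hWvan i w hw
        have hq0 : φ (Function.update b i q) = 0 := hvanish i q hq
        have hpφ : φ (Function.update b i p) = c i := by
          rw [← hc, ← hLapp, ← hc] at *
          rw [map_sum]
          have hterm : ∀ k : Fin m, L i (c k • b k) = if k = i then c k else 0 := by
            intro k
            rw [map_smul, hLapp]
            by_cases hk : k = i
            · subst hk
              rw [Function.update_eq_self, hcal]
              simp [if_pos rfl]
            · have : φ (Function.update b i (b k)) = 0 := by
                apply φ.map_eq_zero_of_eq _ (i := k) (j := i)
                · rw [Function.update_of_ne hk, Function.update_self]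
                · exact hk
              rw [this, if_neg hk]
              simp
          rw [Finset.sum_congr rfl fun k _ => hterm k]
          simp
        have hsum : φ (Function.update b i w) =
            φ (Function.update b i p) + φ (Function.update b i q) := by
          rw [← hpq]
          exact φ.map_update_add b i p q
        rw [h0, hpφ, hq0, add_zero] at hsum
        exact hsum.symm
      have hp0 : p = 0 := by
        rw [← hc]
        simp [hci]
      rw [← hpq, hp0, zero_add]
      exact hq
    refine le_antisymm hle ?_
    intro x hx
    have hmem : x ∈ Submodule.span ℝ (v '' S) ⊔ W := by
      rw [hWcompl.sup_eq_top]; trivial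
    obtain ⟨p, hp, q, hq, hpq⟩ := Submodule.mem_sup.1 hmem
    have hpmem : p ∈ Submodule.span ℝ (v '' Sᶜ) := by
      have hx' : x - q ∈ Submodule.span ℝ (v '' Sᶜ) :=
        Submodule.sub_mem _ hx (hle hq)
      rwa [← hpq, add_sub_cancel_right] at hx'
    have hp0 : p = 0 := by
      have := hcompl.disjoint
      rw [Submodule.disjoint_def] at this
      exact this p hp hpmem
    rw [← hpq, hp0, zero_add]
    exact hq
  · rintro rfl
    rw [hrangeb, hsetc]
    exact ⟨hcompl, fun i w hw => hvanish i w hw⟩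
end

section
/- Equip ℝ^n with its standard inner product ⟨·,·⟩ and let v₁,…,v_n be an orthonormal basis of ℝ^n. Let 1 ≤ m ≤ n and let φ be an alternating m-form on ℝ^n that has comass at most 1 with respect to ⟨·,·⟩ and satisfies φ(v₁,…,v_m) = 1. Then for every vector x ∈ ℝ^n, φ(v₁,…,v_{m−1}, x) = ⟨x, v_m⟩. -/
set_option maxHeartbeats 1000000


/-- right inner product as a linear map -/
def dotRight {n : ℕ} (w : Fin n → ℝ) : (Fin n → ℝ) →ₗ[ℝ] ℝ where
  toFun x := stdInner x w
  map_add' x y := stdInner_add_left x y w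
  map_smul' c x := stdInner_smul_left c x w

/-- If `v₁,…,v_n` is an orthonormal basis of `ℝ^n` and `φ` is an alternating
`m`-form of comass at most `1` (for the standard inner product) with
`φ(v₁,…,v_m) = 1`, then `φ(v₁,…,v_{m-1}, x) = ⟨x, v_m⟩` for every `x ∈ ℝ^n`. -/
theorem stmt7 {n m : ℕ} (hm : 1 ≤ m) (hmn : m ≤ n)
    (v : Fin n → (Fin n → ℝ))
    (hortho : ∀ i j : Fin n, stdInner (v i) (v j) = if i = j then 1 else 0)
    (φ : (Fin n → ℝ) [⋀^Fin m]→ₗ[ℝ] ℝ)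
    (hcomass : ∀ u : Fin m → (Fin n → ℝ), (φ u) ^ 2 ≤ gramStd u)
    (hcal : φ (fun i : Fin m => v (Fin.castLE hmn i)) = 1) :
    ∀ x : Fin n → ℝ,
      φ (Function.update (fun i : Fin m => v (Fin.castLE hmn i)) ⟨m - 1, by omega⟩ x) =
        stdInner x (v (Fin.castLE hmn ⟨m - 1, by omega⟩)) := by
  have hmpos : 0 < m := hm
  haveI : Nonempty (Fin n) := ⟨⟨0, by omega⟩⟩
  set last : Fin m := ⟨m - 1, by omega⟩ with hlastdef
  set base : Fin m → (Fin n → ℝ) := fun i => v (Fin.castLE hmn i) with hbasedef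
  set w0 : Fin n → ℝ := v (Fin.castLE hmn last) with hw0def
  set L1 : (Fin n → ℝ) →ₗ[ℝ] ℝ := φ.toMultilinearMap.toLinearMap base last with hL1
  set L2 : (Fin n → ℝ) →ₗ[ℝ] ℝ := dotRight w0 with hL2
  have hL1app : ∀ x, L1 x = φ (Function.update base last x) := fun x => rfl
  have hφbase : φ base = 1 := hcal
  -- linear independence of v
  have hli : LinearIndependent ℝ v := by
    rw [Fintype.linearIndependent_iff]
    intro c hc j
    have h1 : stdInner (∑ i, c i • v i) (v j) = c j := by
      rw [show stdInner (∑ i, c i • v i) (v j) = ∑ i, c i * stdInner (v i) (v j) from ?_]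
      · simp [hortho]
      · simp [stdInner, Finset.sum_mul, Finset.mul_sum, mul_assoc]
        rw [Finset.sum_comm]
    rw [hc] at h1
    simpa [stdInner] using h1.symm
  have hcard : Fintype.card (Fin n) = Module.finrank ℝ (Fin n → ℝ) := by simp
  let B : Module.Basis (Fin n) ℝ (Fin n → ℝ) := basisOfLinearIndependentOfCardEqFinrank hli hcard
  have hB : ∀ j, B j = v j := fun j => by
    simp [B, coe_basisOfLinearIndependentOfCardEqFinrank]
  -- key: L1 and L2 agree on v j
  have key : ∀ j : Fin n, L1 (v j) = L2 (v j) := by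
    intro j
    have hL2j : L2 (v j) = if j = Fin.castLE hmn last then 1 else 0 := by
      simp only [hL2, dotRight, LinearMap.coe_mk, AddHom.coe_mk, hw0def]
      rw [hortho]
    rcases lt_trichotomy j.val (m - 1) with hj | hj | hj
    · -- j < m-1 : repeated column
      have hne : (⟨j.val, by omega⟩ : Fin m) ≠ last := by
        simp [hlastdef, Fin.ext_iff]; omega
      have hz : φ (Function.update base last (v j)) = 0 := by
        apply φ.map_eq_zero_of_eq _ (i := ⟨j.val, by omega⟩) (j := last) _ hne
        rw [Function.update_of_ne hne, Function.update_self]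
        rfl
      rw [hL1app, hz, hL2j, if_neg]
      intro h
      rw [h] at hj
      simp [hlastdef] at hj
    · -- j = last index
      have hjc : j = Fin.castLE hmn last := by
        simp [hlastdef, Fin.ext_iff]; omega
      rw [hL1app, hL2j, if_pos hjc, hjc]
      have hupd : Function.update base last (v (Fin.castLE hmn last)) = base := by
        rw [show v (Fin.castLE hmn last) = base last from rfl, Function.update_eq_self]
      rw [hupd, hφbase]
    · -- j ≥ m : comass argument
      have hjm : m ≤ j.val := by omega
      set a : ℝ := L1 (v j) with ha
      have hjne : ∀ i : Fin m, j ≠ Fin.castLE hmn i := by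
        intro i h
        have := i.isLt
        rw [h] at hjm
        simp [Fin.castLE] at hjm
        omega
      have hjne' : ∀ i : Fin m, Fin.castLE hmn i ≠ j := fun i => (hjne i).symm
      have hcinj : ∀ i k : Fin m, i ≠ k → (Fin.castLE hmn i : Fin n) ≠ Fin.castLE hmn k := by
        intro i k h hh
        exact h (Fin.castLE_injective hmn hh)
      have hentry : ∀ i k : Fin m,
          stdInner (Function.update base last (w0 + a • v j) i)
            (Function.update base last (w0 + a • v j) k) =
          (Matrix.diagonal (fun i : Fin m => if i = last then 1 + a ^ 2 else 1)) i k := by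
        intro i k
        rcases eq_or_ne i last with hi | hi <;> rcases eq_or_ne k last with hk | hk
        · subst hi; subst hk
          simp only [Function.update_self, Matrix.diagonal_apply_eq, if_pos rfl,
            stdInner_add_left, stdInner_add_right, stdInner_smul_left, stdInner_smul_right]
          simp [hortho, hjne, hjne', hw0def]
          ring
        · subst hi
          rw [Function.update_self, Function.update_of_ne hk,
            Matrix.diagonal_apply_ne _ (Ne.symm hk)]
          simp only [hbasedef, stdInner_add_left, stdInner_smul_left]
          simp [hortho, hjne, hjne', hcinj last k (Ne.symm hk), hw0def]
        · subst hk
          rw [Function.update_self, Function.update_of_ne hi,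
            Matrix.diagonal_apply_ne _ hi]
          simp only [hbasedef, stdInner_add_right, stdInner_smul_right]
          simp [hortho, hjne, hjne', hcinj i last hi, hw0def]
        · rw [Function.update_of_ne hi, Function.update_of_ne hk]
          rcases eq_or_ne i k with h | h
          · subst h
            simp [hbasedef, hortho, Matrix.diagonal_apply_eq, hi]
          · rw [Matrix.diagonal_apply_ne _ h]
            simp [hbasedef, hortho, hcinj i k h]
      have hgram : gramStd (Function.update base last (w0 + a • v j)) = 1 + a ^ 2 := by
        have hmat : (Matrix.of fun i k =>
            stdInner (Function.update base last (w0 + a • v j) i)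
              (Function.update base last (w0 + a • v j) k)) =
            Matrix.diagonal (fun i : Fin m => if i = last then 1 + a ^ 2 else 1) := by
          ext i k; exact hentry i k
        rw [gramStd, hmat, Matrix.det_diagonal]
        rw [Finset.prod_ite_eq' Finset.univ last (fun _ => (1 : ℝ) + a ^ 2)]
        simp
      have hφval : φ (Function.update base last (w0 + a • v j)) = 1 + a * a := by
        rw [φ.map_update_add, φ.map_update_smul]
        have h1 : Function.update base last w0 = base := by
          rw [show w0 = base last from rfl, Function.update_eq_self]
        rw [h1, hφbase, ← hL1app, smul_eq_mul]
      have hcom := hcomass (Function.update base last (w0 + a • v j))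
      rw [hφval, hgram] at hcom
      have ha0 : a = 0 := by nlinarith [sq_nonneg a, sq_nonneg (a * a)]
      rw [hL2j, if_neg (hjne last)]
      exact ha0
  -- conclude
  have hLeq : L1 = L2 := B.ext fun j => by rw [hB]; exact key j
  intro x
  have hx : L1 x = L2 x := by rw [hLeq]
  rw [hL1app] at hx
  exact hx
end

section
/- Let φ be a nonzero alternating m-form on ℝ^n (1 ≤ m ≤ n) and let g be an inner product on ℝ^n. Then sup{ φ(u₁,…,u_m) : u₁,…,u_m ∈ ℝ^n, Gram_g(u₁,…,u_m) = 1 } = ( inf{ √(Gram_g(u₁,…,u_m)) : u₁,…,u_m ∈ ℝ^n, φ(u₁,…,u_m) = 1 } )⁻¹; in particular the infimum on the right-hand side is strictly positive. -/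
namespace Stmt8Aux

open Matrix Finset

lemma gram_def {n m : ℕ} (g : (Fin n → ℝ) → (Fin n → ℝ) → ℝ) (v : Fin m → (Fin n → ℝ)) :
    gram g v = (Matrix.of fun i j => g (v i) (v j)).det := rfl

variable {n m : ℕ}

lemma g_sum_right {g : (Fin n → ℝ) → (Fin n → ℝ) → ℝ} (hlin : ∀ x, IsLinearMap ℝ (g x))
    (x : Fin n → ℝ) {k : ℕ} (c : Fin k → ℝ) (v : Fin k → (Fin n → ℝ)) :
    g x (∑ j, c j • v j) = ∑ j, c j * g x (v j) := by
  let L := IsLinearMap.mk' (g x) (hlin x)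
  have : ∀ y, g x y = L y := fun y => rfl
  simp_rw [this, map_sum, _root_.map_smul, smul_eq_mul]

lemma g_sum_left {g : (Fin n → ℝ) → (Fin n → ℝ) → ℝ} (hsym : ∀ x y, g x y = g y x)
    (hlin : ∀ x, IsLinearMap ℝ (g x))
    {k : ℕ} (c : Fin k → ℝ) (v : Fin k → (Fin n → ℝ)) (y : Fin n → ℝ) :
    g (∑ j, c j • v j) y = ∑ j, c j * g (v j) y := by
  rw [hsym, g_sum_right hlin]
  exact Finset.sum_congr rfl fun j _ => by rw [hsym]

lemma gram_map {g : (Fin n → ℝ) → (Fin n → ℝ) → ℝ} (hsym : ∀ x y, g x y = g y x)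
    (hlin : ∀ x, IsLinearMap ℝ (g x)) (e : Fin m → (Fin n → ℝ))
    (A : Matrix (Fin m) (Fin m) ℝ) :
    gram g (fun i => ∑ j, A i j • e j) = A.det ^ 2 * gram g e := by
  have key : (Matrix.of fun i j => g (∑ k, A i k • e k) (∑ l, A j l • e l))
      = A * (Matrix.of fun i j => g (e i) (e j)) * Aᵀ := by
    ext i j
    simp only [Matrix.of_apply, Matrix.mul_apply, Matrix.transpose_apply]
    rw [g_sum_left hsym hlin]
    simp_rw [g_sum_right hlin, Finset.sum_mul, Finset.mul_sum]
    rw [Finset.sum_comm]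
    exact Finset.sum_congr rfl fun l _ => Finset.sum_congr rfl fun k _ => by ring
  rw [gram_def, gram_def, key, Matrix.det_mul, Matrix.det_mul, Matrix.det_transpose]
  ring

lemma alt_map (φ : (Fin n → ℝ) [⋀^Fin m]→ₗ[ℝ] ℝ) (e : Fin m → (Fin n → ℝ))
    (A : Matrix (Fin m) (Fin m) ℝ) :
    φ (fun i => ∑ j, A i j • e j) = A.det * φ e := by
  classical
  let L : (Fin m → ℝ) →ₗ[ℝ] (Fin n → ℝ) := (Pi.basisFun ℝ (Fin m)).constr ℝ e
  have hL : ∀ x : Fin m → ℝ, L x = ∑ j, x j • e j := by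
    intro x
    rw [Module.Basis.constr_apply_fintype]
    simp [Pi.basisFun_equivFun]
  let ψ := φ.compLinearMap L
  have h1 : ψ (fun i => A i) = φ fun i => ∑ j, A i j • e j := by
    rw [AlternatingMap.compLinearMap_apply]
    simp_rw [hL]
  have h3 : ψ ⇑(Pi.basisFun ℝ (Fin m)) = φ e := by
    rw [AlternatingMap.compLinearMap_apply]
    congr 1
    funext i
    rw [hL]
    simp [Pi.single_apply, ite_smul]
  have h2 := AlternatingMap.eq_smul_basis_det (Pi.basisFun ℝ (Fin m)) ψ
  calc φ (fun i => ∑ j, A i j • e j) = ψ (fun i => A i) := h1.symm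
    _ = (ψ ⇑(Pi.basisFun ℝ (Fin m)) • (Pi.basisFun ℝ (Fin m)).det) (fun i => A i) := by
        rw [← h2]
    _ = φ e * ((Pi.basisFun ℝ (Fin m)).det fun i => A i) := by
        rw [AlternatingMap.smul_apply, h3]; rw [smul_eq_mul]
    _ = A.det * φ e := by
        rw [Pi.basisFun_det]
        show φ e * A.det = A.det * φ e
        ring

lemma gram_pos {g : (Fin n → ℝ) → (Fin n → ℝ) → ℝ} (hg : IsInnerProduct g)
    {u : Fin m → (Fin n → ℝ)} (hu : LinearIndependent ℝ u) : 0 < gram g u := by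
  obtain ⟨hsym, hlin, hpos⟩ := hg
  have hM : (Matrix.of fun i j => g (u i) (u j)).PosDef := by
    refine Matrix.PosDef.of_dotProduct_mulVec_pos ?_ ?_
    · ext i j
      simp only [Matrix.conjTranspose_apply, Matrix.of_apply, star_trivial]
      exact hsym (u j) (u i)
    · intro x hx
      have hw : (∑ i, x i • u i) ≠ 0 := by
        intro h0
        apply hx
        funext i
        exact Fintype.linearIndependent_iff.mp hu x h0 i
      have hgw := hpos _ hw
      have hcalc : g (∑ i, x i • u i) (∑ j, x j • u j)
          = dotProduct (star x) ((Matrix.of fun i j => g (u i) (u j)) *ᵥ x) := by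
        rw [g_sum_left hsym hlin]
        simp_rw [g_sum_right hlin]
        simp only [dotProduct, Matrix.mulVec, Matrix.of_apply, Pi.star_apply,
          star_trivial, dotProduct]
        simp only [Finset.mul_sum]
        refine Finset.sum_congr rfl fun i _ => ?_
        refine Finset.sum_congr rfl fun j _ => by ring
      rw [← hcalc]
      exact hgw
  rw [gram_def]
  exact hM.det_pos

lemma gram_zero_of_dep {g : (Fin n → ℝ) → (Fin n → ℝ) → ℝ}
    (hsym : ∀ x y, g x y = g y x) (hlin : ∀ x, IsLinearMap ℝ (g x))
    {u : Fin m → (Fin n → ℝ)} (hu : ¬ LinearIndependent ℝ u) : gram g u = 0 := by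
  obtain ⟨c, hc0, i, hci⟩ := Fintype.not_linearIndependent_iff.mp hu
  rw [gram_def]
  rw [← Matrix.exists_vecMul_eq_zero_iff]
  refine ⟨c, fun h => hci (congrFun h i), ?_⟩
  funext j
  show dotProduct c (fun k => (Matrix.of fun a b => g (u a) (u b)) k j) = 0
  simp only [dotProduct, Matrix.of_apply]
  have : ∑ k, c k * g (u k) (u j) = g (∑ k, c k • u k) (u j) :=
    (g_sum_left hsym hlin c u (u j)).symm
  rw [this, hc0, hsym]
  exact (hlin (u j)).map_zero

lemma orthonormal_gram {e : Fin m → Fin n → ℝ}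
    (he : ∀ i j, e i ⬝ᵥ e j = if i = j then 1 else 0) :
    (Matrix.of fun i j => e i ⬝ᵥ e j).det = 1 := by
  have : (Matrix.of fun i j => e i ⬝ᵥ e j) = 1 := by
    ext i j
    rw [Matrix.of_apply, he, Matrix.one_apply]
  rw [this, Matrix.det_one]

lemma exists_orthonormal_factor {u : Fin m → Fin n → ℝ} (hu : LinearIndependent ℝ u) :
    ∃ (e : Fin m → Fin n → ℝ) (A : Matrix (Fin m) (Fin m) ℝ),
      (∀ i j, e i ⬝ᵥ e j = if i = j then 1 else 0) ∧ ∀ i, u i = ∑ j, A i j • e j := by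
  classical
  haveI inst : WellFoundedLT (Fin m) := inferInstance
  let eqv := WithLp.linearEquiv 2 ℝ (Fin n → ℝ)
  let u' : Fin m → EuclideanSpace ℝ (Fin n) := fun i => eqv.symm (u i)
  have hu' : LinearIndependent ℝ u' :=
    hu.map' eqv.symm.toLinearMap eqv.symm.ker
  let e' : Fin m → EuclideanSpace ℝ (Fin n) := InnerProductSpace.gramSchmidtNormed ℝ u'
  have he' : Orthonormal ℝ e' := InnerProductSpace.gramSchmidtNormed_orthonormal hu'
  have hspan : ∀ i, u' i ∈ Submodule.span ℝ (Set.range e') := by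
    intro i
    rw [show Submodule.span ℝ (Set.range e') = Submodule.span ℝ (Set.range u') by
      rw [InnerProductSpace.span_gramSchmidtNormed_range, InnerProductSpace.span_gramSchmidt]]
    exact Submodule.subset_span ⟨i, rfl⟩
  choose A hA using fun i => (Submodule.mem_span_range_iff_exists_fun ℝ).mp (hspan i)
  refine ⟨fun j => eqv (e' j), Matrix.of A, fun i j => ?_, fun i => ?_⟩
  · have h := (orthonormal_iff_ite.mp he') i j
    rw [PiLp.inner_apply] at h
    simp only [RCLike.inner_apply, starRingEnd_apply, star_trivial] at h
    rw [← h]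
    exact Finset.sum_congr rfl fun x _ => mul_comm _ _
  · have h := hA i
    have := congrArg eqv h
    rw [map_sum] at this
    simp only [_root_.map_smul] at this
    exact this.symm.trans (by simp [u', eqv])

lemma phi_cont (φ : (Fin n → ℝ) [⋀^Fin m]→ₗ[ℝ] ℝ) :
    Continuous fun e : Fin m → (Fin n → ℝ) => φ e := by
  classical
  have hrep : ∀ e : Fin m → (Fin n → ℝ),
      φ e = ∑ d : Fin m → Fin n, (∏ i, e i (d i)) • φ (fun i => Pi.single (d i) 1) := by
    intro e
    have he : (fun i => ∑ j : Fin n, e i j • (Pi.single j 1 : Fin n → ℝ)) = e := by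
      funext i
      rw [show (fun j : Fin n => e i j • (Pi.single j 1 : Fin n → ℝ))
          = fun j => Pi.single j (e i j) by
        funext j; rw [← Pi.single_smul, smul_eq_mul, mul_one]]
      exact Finset.univ_sum_single (e i)
    conv_lhs => rw [← he]
    rw [show φ (fun i => ∑ j : Fin n, e i j • (Pi.single j 1 : Fin n → ℝ))
        = φ.toMultilinearMap (fun i => ∑ j : Fin n, e i j • (Pi.single j 1 : Fin n → ℝ)) from rfl]
    rw [φ.toMultilinearMap.map_sum (g := fun i j => e i j • (Pi.single j 1 : Fin n → ℝ))]
    exact Finset.sum_congr rfl fun d _ => by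
      rw [φ.toMultilinearMap.map_smul_univ (fun i => e i (d i)) (fun i => Pi.single (d i) 1)]
      rfl
  have : (fun e : Fin m → (Fin n → ℝ) => φ e)
      = fun e => ∑ d : Fin m → Fin n, (∏ i, e i (d i)) • φ (fun i => Pi.single (d i) 1) :=
    funext hrep
  rw [this]
  refine continuous_finset_sum _ fun d _ => ?_
  fun_prop

lemma compact_max (hm : 1 ≤ m) (hmn : m ≤ n) (φ : (Fin n → ℝ) [⋀^Fin m]→ₗ[ℝ] ℝ)
    (hφ : φ ≠ 0) :
    ∃ e₀ : Fin m → (Fin n → ℝ), (∀ i j, e₀ i ⬝ᵥ e₀ j = if i = j then 1 else 0) ∧ 0 < φ e₀ ∧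
      ∀ e : Fin m → (Fin n → ℝ), (∀ i j, e i ⬝ᵥ e j = if i = j then 1 else 0) → |φ e| ≤ φ e₀ := by
  classical
  set K : Set (Fin m → (Fin n → ℝ)) := {e | ∀ i j, e i ⬝ᵥ e j = if i = j then 1 else 0} with hK
  have hdotc : ∀ i j : Fin m, Continuous fun e : Fin m → (Fin n → ℝ) => e i ⬝ᵥ e j := by
    intro i j
    refine continuous_finset_sum _ fun k _ => ?_
    fun_prop
  have hclosed : IsClosed K := by
    have : K = ⋂ (i : Fin m) (j : Fin m),
        {e : Fin m → (Fin n → ℝ) | e i ⬝ᵥ e j = if i = j then 1 else 0} := by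
      ext e; simp [hK, Set.mem_iInter]
    rw [this]
    exact isClosed_iInter fun i => isClosed_iInter fun j =>
      isClosed_eq (hdotc i j) continuous_const
  have hbdd : Bornology.IsBounded K := by
    rw [isBounded_iff_forall_norm_le]
    refine ⟨1, fun e he => ?_⟩
    rw [pi_norm_le_iff_of_nonneg zero_le_one]
    intro i
    rw [pi_norm_le_iff_of_nonneg zero_le_one]
    intro k
    have h1 : ∑ l, e i l * e i l = 1 := by simpa [dotProduct] using he i i
    have hle : e i k * e i k ≤ 1 := by
      rw [← h1]
      exact Finset.single_le_sum (fun l _ => mul_self_nonneg (e i l)) (Finset.mem_univ k)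
    rw [Real.norm_eq_abs]
    exact abs_le_one_iff_mul_self_le_one.mpr hle
  have hKc : IsCompact K := Metric.isCompact_of_isClosed_isBounded hclosed hbdd
  have hKne : K.Nonempty := by
    refine ⟨fun i => Pi.single (Fin.castLE hmn i) 1, fun i j => ?_⟩
    simp only [dotProduct, Pi.single_apply]
    rw [Finset.sum_eq_single (Fin.castLE hmn i)]
    · by_cases h : i = j <;> simp [h, Fin.castLE_inj]
    · intro b _ hb; simp [hb]
    · intro h; exact absurd (Finset.mem_univ _) h
  obtain ⟨e₁, he₁K, hmax'⟩ := hKc.exists_isMaxOn hKne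
    (continuous_abs.comp (phi_cont φ)).continuousOn
  have hmax : ∀ e ∈ K, |φ e| ≤ |φ e₁| := fun e he => hmax' he
  have hpos : 0 < |φ e₁| := by
    obtain ⟨u, hu⟩ : ∃ u, φ u ≠ 0 := by
      by_contra h
      push_neg at h
      exact hφ (AlternatingMap.ext fun u => by rw [h u]; rfl)
    have hind : LinearIndependent ℝ u := by
      by_contra h
      exact hu (AlternatingMap.map_linearDependent φ u h)
    obtain ⟨e, A, heK, huA⟩ := exists_orthonormal_factor hind
    have : φ u = A.det * φ e := by
      rw [show u = fun i => ∑ j, A i j • e j from funext huA]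
      exact alt_map φ e A
    have he0 : φ e ≠ 0 := fun h0 => hu (by rw [this, h0, mul_zero])
    calc 0 < |φ e| := abs_pos.mpr he0
      _ ≤ |φ e₁| := hmax e heK
  rcases le_or_gt (φ e₁) 0 with hneg | hposs
  · set z : Fin m := ⟨0, hm⟩
    refine ⟨Function.update e₁ z (-(e₁ z)), ?_, ?_, ?_⟩
    · intro i j
      have hd := he₁K i j
      rcases eq_or_ne i z with hi | hi <;> rcases eq_or_ne j z with hj | hj
      · subst hi; subst hj
        simpa [Function.update_self, neg_dotProduct, dotProduct_neg] using hd
      · subst hi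
        rw [Function.update_self, Function.update_of_ne hj, neg_dotProduct, hd]
        simp [Ne.symm hj]
      · subst hj
        rw [Function.update_self, Function.update_of_ne hi, dotProduct_neg, hd]
        simp [hi]
      · rw [Function.update_of_ne hi, Function.update_of_ne hj, hd]
    · have hupd : φ (Function.update e₁ z (-(e₁ z))) = -φ e₁ := by
        rw [AlternatingMap.map_update_neg, Function.update_eq_self]
      rw [hupd]
      have hne : φ e₁ ≠ 0 := fun h0 => by simp [h0] at hpos
      cases lt_or_eq_of_le hneg with
      | inl h => linarith
      | inr h => exact absurd h hne
    · intro e heK2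
      have hupd : φ (Function.update e₁ z (-(e₁ z))) = -φ e₁ := by
        rw [AlternatingMap.map_update_neg, Function.update_eq_self]
      rw [hupd]
      calc |φ e| ≤ |φ e₁| := hmax e heK2
        _ = -φ e₁ := abs_of_nonpos hneg
  · exact ⟨e₁, he₁K, hposs, fun e heK2 => (hmax e heK2).trans_eq (abs_of_pos hposs)⟩

lemma dot_symm : ∀ x y : Fin n → ℝ, (fun a b : Fin n → ℝ => a ⬝ᵥ b) x y
    = (fun a b : Fin n → ℝ => a ⬝ᵥ b) y x := fun x y => dotProduct_comm x y

lemma dot_lin : ∀ x : Fin n → ℝ, IsLinearMap ℝ ((fun a b : Fin n → ℝ => a ⬝ᵥ b) x) := by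
  intro x
  exact ⟨fun a b => dotProduct_add x a b, fun c a => by simp [dotProduct_smul]⟩

lemma scale_det (hm : 1 ≤ m) (c : ℝ) :
    (Matrix.diagonal (Function.update (fun _ : Fin m => (1:ℝ)) ⟨0, hm⟩ c)).det = c := by
  classical
  rw [Matrix.det_diagonal, Finset.prod_update_of_mem (Finset.mem_univ _)]
  simp

theorem core (hm : 1 ≤ m) (hmn : m ≤ n) (ψ : (Fin n → ℝ) [⋀^Fin m]→ₗ[ℝ] ℝ) (hψ : ψ ≠ 0) :
    ∃ C : ℝ, 0 < C ∧
      IsLeast {r : ℝ | ∃ u : Fin m → (Fin n → ℝ), ψ u = 1 ∧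
        r = Real.sqrt (gram (fun x y => x ⬝ᵥ y) u)} C⁻¹ ∧
      IsGreatest {r : ℝ | ∃ u : Fin m → (Fin n → ℝ), gram (fun x y => x ⬝ᵥ y) u = 1 ∧
        ψ u = r} C := by
  classical
  obtain ⟨e₀, he₀K, he₀pos, hmaxphi⟩ := compact_max hm hmn ψ hψ
  have hgram_orth : ∀ e : Fin m → (Fin n → ℝ), (∀ i j, e i ⬝ᵥ e j = if i = j then 1 else 0) →
      gram (fun x y => x ⬝ᵥ y) e = 1 := fun e he => by
    rw [gram_def]; exact orthonormal_gram he
  set z : Fin m := ⟨0, hm⟩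
  have hindep : ∀ u : Fin m → (Fin n → ℝ), ψ u ≠ 0 → LinearIndependent ℝ u := by
    intro u hu
    by_contra h
    exact hu (AlternatingMap.map_linearDependent ψ u h)
  refine ⟨ψ e₀, he₀pos, ⟨?_, ?_⟩, ⟨?_, ?_⟩⟩
  · -- C⁻¹ ∈ S
    set D := Matrix.diagonal (Function.update (fun _ : Fin m => (1:ℝ)) z ((ψ e₀)⁻¹)) with hD
    refine ⟨fun i => ∑ j, D i j • e₀ j, ?_, ?_⟩
    · rw [alt_map ψ e₀ D, hD, scale_det hm]
      exact inv_mul_cancel₀ (ne_of_gt he₀pos)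
    · rw [gram_map dot_symm dot_lin e₀ D, hgram_orth e₀ he₀K, hD, scale_det hm, mul_one]
      exact (Real.sqrt_sq (inv_nonneg.mpr he₀pos.le)).symm
  · -- lower bound of S
    rintro s ⟨u, hpu1, hs⟩
    have hind : LinearIndependent ℝ u := hindep u (by rw [hpu1]; norm_num)
    obtain ⟨e, A, heK, huA⟩ := exists_orthonormal_factor hind
    have huf : u = fun i => ∑ j, A i j • e j := funext huA
    have h1 : A.det * ψ e = 1 := by rw [← alt_map ψ e A, ← huf, hpu1]
    have hgu : gram (fun x y => x ⬝ᵥ y) u = A.det ^ 2 := by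
      rw [huf, gram_map dot_symm dot_lin e A, hgram_orth e heK, mul_one]
    have habs : 1 = |A.det| * |ψ e| := by
      rw [← abs_mul, h1, abs_one]
    have hcb : |ψ e| ≤ ψ e₀ := hmaxphi e heK
    have hAd : 0 < |A.det| := by
      rcases eq_or_lt_of_le (abs_nonneg A.det) with h | h
      · exfalso; rw [← h] at habs; simp at habs
      · exact h
    have h2 : 1 ≤ |A.det| * ψ e₀ := by
      calc (1:ℝ) = |A.det| * |ψ e| := habs
        _ ≤ |A.det| * ψ e₀ := by
            exact mul_le_mul_of_nonneg_left hcb (abs_nonneg A.det)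
    have h3 : (ψ e₀)⁻¹ ≤ |A.det| := by
      rw [inv_eq_one_div, div_le_iff₀ he₀pos]
      exact h2
    calc (ψ e₀)⁻¹ ≤ |A.det| := h3
      _ = Real.sqrt (A.det ^ 2) := (Real.sqrt_sq_eq_abs A.det).symm
      _ = s := by rw [← hgu, ← hs]
  · -- C ∈ T
    exact ⟨e₀, hgram_orth e₀ he₀K, rfl⟩
  · -- upper bound of T
    rintro t ⟨u, hgu, hpu⟩
    have hind : LinearIndependent ℝ u := by
      by_contra h
      rw [gram_zero_of_dep dot_symm dot_lin h] at hgu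
      norm_num at hgu
    obtain ⟨e, A, heK, huA⟩ := exists_orthonormal_factor hind
    have huf : u = fun i => ∑ j, A i j • e j := funext huA
    have h1 : gram (fun x y => x ⬝ᵥ y) u = A.det ^ 2 := by
      rw [huf, gram_map dot_symm dot_lin e A, hgram_orth e heK, mul_one]
    have hdet1 : |A.det| = 1 := by
      have : A.det ^ 2 = 1 := by rw [← h1, hgu]
      nlinarith [sq_abs A.det, abs_nonneg A.det]
    have hpsiu : ψ u = A.det * ψ e := by rw [huf, alt_map ψ e A]
    calc t = ψ u := hpu.symm
      _ ≤ |ψ u| := le_abs_self _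
      _ = |A.det| * |ψ e| := by rw [hpsiu, abs_mul]
      _ = |ψ e| := by rw [hdet1, one_mul]
      _ ≤ ψ e₀ := hmaxphi e heK

lemma vec_decomp (x : Fin n → ℝ) : x = ∑ i, x i • (Pi.single i 1 : Fin n → ℝ) := by
  have h : ∑ i, x i • (Pi.single i 1 : Fin n → ℝ) = ∑ i, Pi.single i (x i) :=
    Finset.sum_congr rfl fun i _ => by rw [← Pi.single_smul, smul_eq_mul, mul_one]
  rw [h, Finset.univ_sum_single]

end Stmt8Aux

open Stmt8Aux Matrix Finset in
/-- Comass as a reciprocal: for a nonzero alternating `m`-form `φ` and an inner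
product `g` on `ℝ^n`, the infimum of the `g`-volumes `√Gram_g(u₁,…,u_m)` over
tuples with `φ(u₁,…,u_m) = 1` is strictly positive, and the comass
`sup{φ(u) : Gram_g(u) = 1}` equals its inverse. -/
theorem stmt8 {n m : ℕ} (hm : 1 ≤ m) (hmn : m ≤ n)
    (φ : (Fin n → ℝ) [⋀^Fin m]→ₗ[ℝ] ℝ) (hφ : φ ≠ 0)
    (g : (Fin n → ℝ) → (Fin n → ℝ) → ℝ) (hg : IsInnerProduct g) :
    0 < sInf {r : ℝ | ∃ u : Fin m → (Fin n → ℝ), φ u = 1 ∧ r = Real.sqrt (gram g u)} ∧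
      sSup {r : ℝ | ∃ u : Fin m → (Fin n → ℝ), gram g u = 1 ∧ φ u = r} =
        (sInf {r : ℝ | ∃ u : Fin m → (Fin n → ℝ), φ u = 1 ∧ r = Real.sqrt (gram g u)})⁻¹ := by
  classical
  obtain ⟨hsym, hlin, hpos⟩ := hg
  set G := Matrix.of (fun i j => g (Pi.single i 1) (Pi.single j 1)) with hG
  have hGrep : ∀ x y : Fin n → ℝ, g x y = x ⬝ᵥ (G *ᵥ y) := by
    intro x y
    conv_lhs => rw [vec_decomp x, vec_decomp y]
    rw [g_sum_left hsym hlin]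
    simp_rw [g_sum_right hlin]
    simp only [dotProduct, Matrix.mulVec, Matrix.of_apply, hG]
    simp only [Finset.mul_sum]
    refine Finset.sum_congr rfl fun i _ => ?_
    refine Finset.sum_congr rfl fun j _ => by ring
  have hGpd : G.PosDef := by
    refine Matrix.PosDef.of_dotProduct_mulVec_pos ?_ ?_
    · ext i j
      simp only [Matrix.conjTranspose_apply, Matrix.of_apply, star_trivial, hG]
      exact hsym _ _
    · intro x hx
      have h := hpos x hx
      rw [hGrep x x] at h
      simpa using h
  obtain ⟨P, hPsa, -, hPP'⟩ := open scoped MatrixOrder in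
    CFC.exists_sqrt_of_isSelfAdjoint_of_quasispectrumRestricts hGpd.isHermitian
      (QuasispectrumRestricts.nnreal_of_nonneg hGpd.posSemidef.nonneg)
  have hPP : P * P = G := hPP'
  have hPherm : P.IsHermitian := hPsa
  have hPt : Pᵀ = P := by
    ext i j
    have h := congrFun (congrFun hPherm i) j
    simpa [Matrix.conjTranspose_apply, star_trivial] using h
  have hPdet : IsUnit P.det := by
    have h2 : P.det * P.det = G.det := by rw [← Matrix.det_mul, hPP]
    have hGd : G.det ≠ 0 := ne_of_gt hGpd.det_pos
    exact isUnit_iff_ne_zero.mpr (fun h0 => hGd (by rw [← h2, h0, zero_mul]))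
  have hPinv : P⁻¹ * P = 1 := Matrix.nonsing_inv_mul P hPdet
  have hPinv' : P * P⁻¹ = 1 := Matrix.mul_nonsing_inv P hPdet
  have hgdot : ∀ x y : Fin n → ℝ, g x y = (P *ᵥ x) ⬝ᵥ (P *ᵥ y) := by
    intro x y
    rw [hGrep, ← hPP, ← Matrix.mulVec_mulVec, dotProduct_mulVec,
      ← Matrix.mulVec_transpose, hPt]
  set ψ := φ.compLinearMap (Matrix.mulVecLin P⁻¹) with hψdef
  have hψap : ∀ v : Fin m → (Fin n → ℝ), ψ v = φ (fun i => P⁻¹ *ᵥ (v i)) := by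
    intro v
    rw [hψdef, AlternatingMap.compLinearMap_apply]
    simp [Matrix.mulVecLin_apply]
  have hPPinv : ∀ x : Fin n → ℝ, P⁻¹ *ᵥ (P *ᵥ x) = x := fun x => by
    rw [Matrix.mulVec_mulVec, hPinv, Matrix.one_mulVec]
  have hPinvP : ∀ x : Fin n → ℝ, P *ᵥ (P⁻¹ *ᵥ x) = x := fun x => by
    rw [Matrix.mulVec_mulVec, hPinv', Matrix.one_mulVec]
  have hcomp : ∀ u : Fin m → (Fin n → ℝ), ψ (fun i => P *ᵥ u i) = φ u := by
    intro u
    rw [hψap]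
    simp only [hPPinv]
  have hgram : ∀ u : Fin m → (Fin n → ℝ),
      gram (fun x y => x ⬝ᵥ y) (fun i => P *ᵥ u i) = gram g u := by
    intro u
    rw [gram_def, gram_def]
    congr 1
    ext i j
    simp only [Matrix.of_apply]
    exact (hgdot (u i) (u j)).symm
  have hψ0 : ψ ≠ 0 := by
    intro h
    apply hφ
    ext u
    have hc := hcomp u
    rw [h] at hc
    simpa using hc.symm
  have hSset : {r : ℝ | ∃ u : Fin m → (Fin n → ℝ), φ u = 1 ∧ r = Real.sqrt (gram g u)}
      = {r : ℝ | ∃ u : Fin m → (Fin n → ℝ), ψ u = 1 ∧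
          r = Real.sqrt (gram (fun x y => x ⬝ᵥ y) u)} := by
    ext r
    constructor
    · rintro ⟨u, h1, h2⟩
      exact ⟨fun i => P *ᵥ u i, by rw [hcomp]; exact h1, by rw [hgram]; exact h2⟩
    · rintro ⟨v, h1, h2⟩
      refine ⟨fun i => P⁻¹ *ᵥ v i, ?_, ?_⟩
      · rw [← hψap v]; exact h1
      · have h := hgram (fun i => P⁻¹ *ᵥ v i)
        simp only [hPinvP] at h
        rw [← h]; exact h2
  have hTset : {r : ℝ | ∃ u : Fin m → (Fin n → ℝ), gram g u = 1 ∧ φ u = r}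
      = {r : ℝ | ∃ u : Fin m → (Fin n → ℝ), gram (fun x y => x ⬝ᵥ y) u = 1 ∧ ψ u = r} := by
    ext r
    constructor
    · rintro ⟨u, h1, h2⟩
      exact ⟨fun i => P *ᵥ u i, by rw [hgram]; exact h1, by rw [hcomp]; exact h2⟩
    · rintro ⟨v, h1, h2⟩
      refine ⟨fun i => P⁻¹ *ᵥ v i, ?_, ?_⟩
      · have h := hgram (fun i => P⁻¹ *ᵥ v i)
        simp only [hPinvP] at h
        rw [h] at h1; exact h1
      · rw [← hψap v]; exact h2
  rw [hSset, hTset]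
  obtain ⟨C, hC, hleast, hgreat⟩ := core hm hmn ψ hψ0
  rw [hleast.csInf_eq, hgreat.csSup_eq, inv_inv]
  exact ⟨inv_pos.mpr hC, rfl⟩
end

section
/- For every m ≥ 1, the function F : ℝ^m → ℝ defined by F(X₁,…,X_m) = (X₁·X₂·⋯·X_m)⁻¹ is strictly convex on the open positive orthant {X ∈ ℝ^m : Xᵢ > 0 for all i}. -/
/-- The function `F(X₁,…,X_m) = (X₁⋯X_m)⁻¹` is strictly convex on the open
positive orthant of `ℝ^m`. -/
theorem stmt9 (m : ℕ) (hm : 1 ≤ m) :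
    StrictConvexOn ℝ {X : Fin m → ℝ | ∀ i, 0 < X i}
      (fun X : Fin m → ℝ => (∏ i, X i)⁻¹) := by
  have hneglog : StrictConvexOn ℝ (Set.Ioi (0:ℝ)) (fun x => -Real.log x) :=
    strictConcaveOn_log_Ioi.neg
  have hset : {X : Fin m → ℝ | ∀ i, 0 < X i} = Set.univ.pi fun _ => Set.Ioi (0:ℝ) := by
    ext X; simp [Set.mem_pi]
  constructor
  · rw [hset]; exact convex_pi fun i _ => convex_Ioi 0
  · intro x hx y hy hxy a b ha hb hab
    simp only [Set.mem_setOf_eq] at hx hy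
    obtain ⟨j, hj⟩ : ∃ j, x j ≠ y j := by
      by_contra h; push_neg at h; exact hxy (funext h)
    have hz : ∀ i, 0 < a * x i + b * y i := fun i => add_pos (mul_pos ha (hx i)) (mul_pos hb (hy i))
    have key : ∀ (w : Fin m → ℝ), (∀ i, 0 < w i) →
        (∏ i, w i)⁻¹ = Real.exp (∑ i, -Real.log (w i)) := by
      intro w hw
      rw [Real.exp_sum]
      rw [← Finset.prod_inv_distrib]
      refine Finset.prod_congr rfl fun i _ => ?_
      rw [Real.exp_neg, Real.exp_log (hw i)]
    have hcombo : (fun X : Fin m → ℝ => (∏ i, X i)⁻¹) (a • x + b • y)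
        = Real.exp (∑ i, -Real.log (a * x i + b * y i)) := by
      simpa using key (fun i => a * x i + b * y i) hz
    rw [hcombo]
    simp only [smul_eq_mul]
    rw [key x hx, key y hy]
    have hsum : (∑ i, -Real.log (a * x i + b * y i))
        < a * (∑ i, -Real.log (x i)) + b * (∑ i, -Real.log (y i)) := by
      rw [Finset.mul_sum, Finset.mul_sum, ← Finset.sum_add_distrib]
      refine Finset.sum_lt_sum (fun i _ => ?_) ⟨j, Finset.mem_univ j, ?_⟩
      · have := hneglog.convexOn.2 (Set.mem_Ioi.2 (hx i)) (Set.mem_Ioi.2 (hy i))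
          ha.le hb.le hab
        simpa [smul_eq_mul] using this
      · have := hneglog.2 (Set.mem_Ioi.2 (hx j)) (Set.mem_Ioi.2 (hy j)) hj ha hb hab
        simpa [smul_eq_mul] using this
    calc Real.exp (∑ i, -Real.log (a * x i + b * y i))
        < Real.exp (a * (∑ i, -Real.log (x i)) + b * (∑ i, -Real.log (y i))) :=
          Real.exp_lt_exp.2 hsum
      _ ≤ a * Real.exp (∑ i, -Real.log (x i)) + b * Real.exp (∑ i, -Real.log (y i)) := by
          have := convexOn_exp.2 (Set.mem_univ (∑ i, -Real.log (x i)))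
            (Set.mem_univ (∑ i, -Real.log (y i))) ha.le hb.le hab
          simpa [smul_eq_mul] using this
end

section
/- Let m ≥ 1 and let λ₁,…,λ_m be positive real numbers. Then for every s ∈ [0,1], (∏_{i=1}^m ((1−s) + s·λᵢ))⁻¹ ≤ (1−s) + s·(∏_{i=1}^m λᵢ)⁻¹; equivalently, ∏_{i=1}^m ((1−s) + s·λᵢ) ≥ ((1−s) + s·(∏_{i=1}^m λᵢ)⁻¹)⁻¹. Moreover, if s ∈ (0,1), then equality holds if and only if λᵢ = 1 for all i. -/
open Finset

/-- Weighted AM-GM for two points, non-strict. -/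
lemma aux_amgm {x s : ℝ} (hx : 0 < x) (hs0 : 0 ≤ s) (hs1 : s ≤ 1) :
    x ^ s ≤ (1 - s) + s * x := by
  have h : (1 + (x - 1)) ^ s ≤ 1 + s * (x - 1) :=
    rpow_one_add_le_one_add_mul_self (by linarith) hs0 hs1
  have hx1 : (1 : ℝ) + (x - 1) = x := by ring
  rw [hx1] at h
  nlinarith [h]

/-- Weighted AM-GM for two points, strict. -/
lemma aux_amgm_strict {x s : ℝ} (hx : 0 < x) (hx1 : x ≠ 1) (hs0 : 0 < s) (hs1 : s < 1) :
    x ^ s < (1 - s) + s * x := by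
  have h : (1 + (x - 1)) ^ s < 1 + s * (x - 1) :=
    rpow_one_add_lt_one_add_mul_self (by linarith) (by intro h; apply hx1; linarith) hs0 hs1
  have hx2 : (1 : ℝ) + (x - 1) = x := by ring
  rw [hx2] at h
  nlinarith [h]

/-- For positive reals `λ₁,…,λ_m` and `s ∈ [0,1]`,
`(∏ ((1-s) + s·λᵢ))⁻¹ ≤ (1-s) + s·(∏ λᵢ)⁻¹`, equivalently
`∏ ((1-s) + s·λᵢ) ≥ ((1-s) + s·(∏ λᵢ)⁻¹)⁻¹`; and for `s ∈ (0,1)` equality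
holds if and only if all `λᵢ = 1`. -/
theorem stmt10 (m : ℕ) (hm : 1 ≤ m) (lam : Fin m → ℝ) (hlam : ∀ i, 0 < lam i) :
    (∀ s ∈ Set.Icc (0 : ℝ) 1,
        (∏ i, ((1 - s) + s * lam i))⁻¹ ≤ (1 - s) + s * (∏ i, lam i)⁻¹) ∧
      (∀ s ∈ Set.Icc (0 : ℝ) 1,
        ((1 - s) + s * (∏ i, lam i)⁻¹)⁻¹ ≤ ∏ i, ((1 - s) + s * lam i)) ∧
      ∀ s ∈ Set.Ioo (0 : ℝ) 1,
        ((∏ i, ((1 - s) + s * lam i))⁻¹ = (1 - s) + s * (∏ i, lam i)⁻¹ ↔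
          ∀ i, lam i = 1) := by
  have hP : 0 < ∏ i, lam i := Finset.prod_pos fun i _ => hlam i
  -- positivity of factors
  have hFpos : ∀ s ∈ Set.Icc (0 : ℝ) 1, ∀ i, 0 < (1 - s) + s * lam i := by
    intro s hs i
    rcases eq_or_lt_of_le hs.1 with h | h
    · simp [← h]
    · have : 0 < s * lam i := mul_pos h (hlam i)
      have h1 : (0 : ℝ) ≤ 1 - s := by linarith [hs.2]
      linarith
  have hProdPos : ∀ s ∈ Set.Icc (0 : ℝ) 1, 0 < ∏ i, ((1 - s) + s * lam i) :=
    fun s hs => Finset.prod_pos fun i _ => hFpos s hs i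
  -- key product inequality: (∏ lam)^s ≤ ∏ ((1-s)+s·λᵢ)
  have hkey : ∀ s ∈ Set.Icc (0 : ℝ) 1,
      (∏ i, lam i) ^ s ≤ ∏ i, ((1 - s) + s * lam i) := by
    intro s hs
    rw [← Real.finset_prod_rpow _ _ (fun i _ => (hlam i).le)]
    exact Finset.prod_le_prod (fun i _ => Real.rpow_nonneg (hlam i).le s)
      (fun i _ => aux_amgm (hlam i) hs.1 hs.2)
  have hPinv : ∀ s ∈ Set.Icc (0 : ℝ) 1,
      ((∏ i, lam i) ^ s)⁻¹ ≤ (1 - s) + s * (∏ i, lam i)⁻¹ := by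
    intro s hs
    rw [← Real.inv_rpow hP.le]
    exact aux_amgm (inv_pos.mpr hP) hs.1 hs.2
  have hPspos : ∀ s : ℝ, 0 < (∏ i, lam i) ^ s := fun s => Real.rpow_pos_of_pos hP s
  have main : ∀ s ∈ Set.Icc (0 : ℝ) 1,
      (∏ i, ((1 - s) + s * lam i))⁻¹ ≤ (1 - s) + s * (∏ i, lam i)⁻¹ := by
    intro s hs
    exact le_trans (inv_anti₀ (hPspos s) (hkey s hs)) (hPinv s hs)
  have hRHSpos : ∀ s ∈ Set.Icc (0 : ℝ) 1, 0 < (1 - s) + s * (∏ i, lam i)⁻¹ := by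
    intro s hs
    rcases eq_or_lt_of_le hs.1 with h | h
    · simp [← h]
    · have : 0 < s * (∏ i, lam i)⁻¹ := mul_pos h (inv_pos.mpr hP)
      have h1 : (0 : ℝ) ≤ 1 - s := by linarith [hs.2]
      linarith
  refine ⟨main, ?_, ?_⟩
  · intro s hs
    have h := inv_anti₀ (inv_pos.mpr (hProdPos s hs)) (main s hs)
    rwa [inv_inv] at h
  · intro s hs
    constructor
    · -- equality implies all λᵢ = 1
      intro heq
      by_contra hne
      push_neg at hne
      obtain ⟨j, hj⟩ := hne
      have hs' : s ∈ Set.Icc (0 : ℝ) 1 := ⟨hs.1.le, hs.2.le⟩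
      -- strict inequality, contradiction
      have hstrict : (∏ i, ((1 - s) + s * lam i))⁻¹ < (1 - s) + s * (∏ i, lam i)⁻¹ := by
        by_cases hP1 : (∏ i, lam i) = 1
        · -- first step strict
          have h1 : ∏ i, (lam i) ^ s < ∏ i, ((1 - s) + s * lam i) := by
            refine Finset.prod_lt_prod (fun i _ => Real.rpow_pos_of_pos (hlam i) s)
              (fun i _ => aux_amgm (hlam i) hs.1.le hs.2.le) ?_
            exact ⟨j, Finset.mem_univ j, aux_amgm_strict (hlam j) hj hs.1 hs.2⟩
          have h2 : (1 : ℝ) < ∏ i, ((1 - s) + s * lam i) := by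
            have := Real.finset_prod_rpow Finset.univ lam (fun i _ => (hlam i).le) s
            rw [this, hP1, Real.one_rpow] at h1
            exact h1
          have h3 : (∏ i, ((1 - s) + s * lam i))⁻¹ < 1 := by
            rw [inv_lt_one_iff₀]; right; exact h2
          have h4 : (1 - s) + s * (∏ i, lam i)⁻¹ = 1 := by rw [hP1]; ring
          rw [h4]; exact h3
        · -- second step strict
          have h1 : ((∏ i, lam i) ^ s)⁻¹ < (1 - s) + s * (∏ i, lam i)⁻¹ := by
            rw [← Real.inv_rpow hP.le]
            exact aux_amgm_strict (inv_pos.mpr hP) (by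
              intro h; apply hP1; rw [← inv_inv (∏ i, lam i), h, inv_one]) hs.1 hs.2
          exact lt_of_le_of_lt (inv_anti₀ (hPspos s) (hkey s hs')) h1
      exact absurd heq hstrict.ne
    · intro h
      simp [h]
end
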